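/- Let T be an increasing shifted tableau with first-row maximum T_{(1,λ₁)} < a, and suppose a < b < c with row(T)·bac an FPF-involution word. Then both insertions T ← bac and T ← bca append a and c to the end of the first row of T (giving first row ending ⋯, a, c) and then insert b into the second row, yielding equal tableaux T ← bac = T ← bca. -/

import Mathlib

/-- The function underlying the permutation `Θ = (12)(34)(56)⋯` on positive integers
(fixing `0`). -/
def thetaFun (n : ℕ) : ℕ :=
  if n = 0 then 0 else if n % 2 = 1 then n + 1 else n - 1

lemma thetaFun_involutive : Function.Involutive thetaFun := by
  intro n
  by_cases h0 : n = 0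
  · simp [thetaFun, h0]
  · by_cases h1 : n % 2 = 1
    · have e1 : thetaFun n = n + 1 := by simp [thetaFun, h0, h1]
      have h2 : ¬ ((n + 1) % 2 = 1) := by omega
      have h3 : ¬ (n + 1 = 0) := by omega
      rw [e1]
      simp only [thetaFun, if_neg h3, if_neg h2]
      omega
    · have e1 : thetaFun n = n - 1 := by simp [thetaFun, h0, h1]
      have h2 : (n - 1) % 2 = 1 := by omega
      have h3 : ¬ (n - 1 = 0) := by omega
      rw [e1]
      simp only [thetaFun, if_neg h3, if_pos h2]
      omega

/-- The fixed-point-free involution `Θ = (12)(34)(56)⋯`. -/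
def theta : Equiv.Perm ℕ := Function.Involutive.toPerm thetaFun thetaFun_involutive

/-- The simple transposition `s_i = (i, i+1)`. -/
def sPerm (i : ℕ) : Equiv.Perm ℕ := Equiv.swap i (i + 1)

/-- For a word `w = i₁i₂⋯i_l`, the permutation `s_{i_l}⋯s_{i₁} Θ s_{i₁}⋯s_{i_l}`. -/
def heckeConj (w : List ℕ) : Equiv.Perm ℕ :=
  ((w.map sPerm).reverse).prod * theta * (w.map sPerm).prod

/-- `w` is a symplectic Hecke word for `z`, i.e. a word of positive letters with
`z = s_{i_l}⋯s_{i₁} Θ s_{i₁}⋯s_{i_l}`. -/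
def SympHecke (z : Equiv.Perm ℕ) (w : List ℕ) : Prop :=
  (∀ i ∈ w, 1 ≤ i) ∧ z = heckeConj w

/-- `z` belongs to `F_∞`, the conjugacy set `{π⁻¹ Θ π : π ∈ S_∞}`. -/
def InFinf (z : Equiv.Perm ℕ) : Prop := ∃ w : List ℕ, SympHecke z w

/-- `w` is an FPF-involution word for `z`: a symplectic Hecke word for `z` of minimal
length among all symplectic Hecke words for `z`. -/
def IsFPFWordFor (z : Equiv.Perm ℕ) (w : List ℕ) : Prop :=
  SympHecke z w ∧ ∀ w' : List ℕ, SympHecke z w' → w.length ≤ w'.length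

/-- `w` is an FPF-involution word (for the element it determines). -/
def IsFPFWord (w : List ℕ) : Prop := IsFPFWordFor (heckeConj w) w
/-- A shifted tableau, given as its list of rows (top to bottom); row `i` (0-indexed)
implicitly occupies absolute columns `i, i+1, …`. -/
abbrev Tab := List (List ℕ)

/-- Replace row `i` of `T` by `r`, creating a new row if `i = T.length`. -/
def updRow (T : Tab) (i : ℕ) (r : List ℕ) : Tab :=
  if i < T.length then T.set i r else T ++ [r]

/-- The entries of absolute column `c` of `T`, from top to bottom. -/
def colList (T : Tab) (c : ℕ) : List ℕ :=
  (List.range (c + 1)).filterMap (fun i => (T[i]?).bind (fun r => r[c - i]?))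

mutual
/-- `InsRow T i a T' pos pr`: the row-insertion phase of FPF-involution Coxeter-Knuth
insertion, inserting the letter `a` into row `i` of `T`, eventually producing the
tableau `T'` with new box at position `pos` (row, absolute column), `pr = true` iff the
insertion terminated with a column insertion. -/
inductive InsRow : Tab → ℕ → ℕ → Tab → ℕ × ℕ → Bool → Prop
  | append (T : Tab) (i a : ℕ) (r : List ℕ) :
      r = T.getD i [] →
      r.dropWhile (fun x => decide (x < a)) = [] →
      InsRow T i a (updRow T i (r ++ [a])) (i, i + r.length) false
  | equal (T : Tab) (i a : ℕ) (rest : List ℕ) (T' : Tab) (pos : ℕ × ℕ) (pr : Bool) :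
      (T.getD i []).dropWhile (fun x => decide (x < a)) = a :: rest →
      InsRow T (i+1) (a+1) T' pos pr →
      InsRow T i a T' pos pr
  | parity (T : Tab) (i a b : ℕ) (rest : List ℕ) (T' : Tab) (pos : ℕ × ℕ) (pr : Bool) :
      (T.getD i []).takeWhile (fun x => decide (x < a)) = [] →
      (T.getD i []).dropWhile (fun x => decide (x < a)) = b :: rest →
      a < b → a % 2 ≠ b % 2 →
      InsCol T (i+1) (a+2) T' pos pr →
      InsRow T i a T' pos pr
  | bumpRow (T : Tab) (i a b : ℕ) (pre rest : List ℕ) (T' : Tab) (pos : ℕ × ℕ) (pr : Bool) :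
      pre = (T.getD i []).takeWhile (fun x => decide (x < a)) →
      (T.getD i []).dropWhile (fun x => decide (x < a)) = b :: rest →
      a < b → pre ≠ [] →
      InsRow (T.set i (pre ++ a :: rest)) (i+1) b T' pos pr →
      InsRow T i a T' pos pr
  | bumpDiag (T : Tab) (i a b : ℕ) (rest : List ℕ) (T' : Tab) (pos : ℕ × ℕ) (pr : Bool) :
      (T.getD i []).takeWhile (fun x => decide (x < a)) = [] →
      (T.getD i []).dropWhile (fun x => decide (x < a)) = b :: rest →
      a < b → a % 2 = b % 2 →
      InsCol (T.set i (a :: rest)) (i+1) b T' pos pr →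
      InsRow T i a T' pos pr

/-- `InsCol T c x T' pos pr`: the column-insertion phase, inserting `x` into the
absolute column `c` of `T`. -/
inductive InsCol : Tab → ℕ → ℕ → Tab → ℕ × ℕ → Bool → Prop
  | append (T : Tab) (c x k : ℕ) :
      (colList T c).dropWhile (fun y => decide (y < x)) = [] →
      k = (colList T c).length →
      (T.getD k []).length = c - k →
      k ≤ c →
      InsCol T c x (updRow T k ((T.getD k []) ++ [x])) (k, c) true
  | equal (T : Tab) (c x : ℕ) (rest : List ℕ) (T' : Tab) (pos : ℕ × ℕ) (pr : Bool) :
      (colList T c).dropWhile (fun y => decide (y < x)) = x :: rest →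
      InsCol T (c+1) (x+1) T' pos pr →
      InsCol T c x T' pos pr
  | bump (T : Tab) (c x b k : ℕ) (rest : List ℕ) (T' : Tab) (pos : ℕ × ℕ) (pr : Bool) :
      (colList T c).dropWhile (fun y => decide (y < x)) = b :: rest →
      x < b →
      k = ((colList T c).takeWhile (fun y => decide (y < x))).length →
      InsCol (T.set k ((T.getD k []).set (c - k) x)) (c+1) b T' pos pr →
      InsCol T c x T' pos pr
end

/-- Insertion of a word, letter by letter, each letter starting at the first row.
`InsWord T w T'` means `T ← w = T'`. -/
inductive InsWord : Tab → List ℕ → Tab → Prop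
  | nil (T : Tab) : InsWord T [] T
  | cons (T T₁ T₂ : Tab) (a : ℕ) (w : List ℕ) (pos : ℕ × ℕ) (pr : Bool) :
      InsRow T 0 a T₁ pos pr → InsWord T₁ w T₂ → InsWord T (a :: w) T₂

/-- A recording tableau: each box carries a label together with a primed flag. -/
abbrev RTab := List (List (ℕ × Bool))

/-- Replace row `i` of a recording tableau, creating a new row if needed. -/
def updRowR (Q : RTab) (i : ℕ) (r : List (ℕ × Bool)) : RTab :=
  if i < Q.length then Q.set i r else Q ++ [r]

/-- `InsWordRec T Q k w T' Q'`: insertion of the word `w` starting from the pair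
`(T, Q)` with next label `k`, recording label `k` (primed iff the insertion of the
letter terminated with a column insertion) in the new box. -/
inductive InsWordRec : Tab → RTab → ℕ → List ℕ → Tab → RTab → Prop
  | nil (T : Tab) (Q : RTab) (k : ℕ) : InsWordRec T Q k [] T Q
  | cons (T T₁ T₂ : Tab) (Q Q₂ : RTab) (k a i j : ℕ) (w : List ℕ) (pr : Bool) :
      InsRow T 0 a T₁ (i, j) pr →
      InsWordRec T₁ (updRowR Q i ((Q.getD i []) ++ [(k, pr)])) (k+1) w T₂ Q₂ →
      InsWordRec T Q k (a :: w) T₂ Q₂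

/-- `T` is an increasing shifted tableau (with positive entries). -/
def IsIncreasingTab (T : Tab) : Prop :=
  (∀ r ∈ T, r ≠ []) ∧
  List.Chain' (fun r s : List ℕ => s.length < r.length) T ∧
  (∀ r ∈ T, List.Chain' (· < ·) r) ∧
  (∀ r ∈ T, ∀ x ∈ r, 1 ≤ x) ∧
  (∀ i k x y, (T.getD (i+1) [])[k]? = some x →
      (T.getD i [])[k+1]? = some y → y < x)

/-- The row reading word of `T`: rows from bottom to top, each left to right. -/
def rowWord (T : Tab) : List ℕ := T.reverse.flatten

section Helpers

open List

/-- Extend the first row of a tableau by one extra entry `γ`. -/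
def extT (T : Tab) (γ : ℕ) : Tab := (T.getD 0 [] ++ [γ]) :: T.tail

/-- The entry of `T` in row `j`, absolute column `c` (guarded). -/
def ent (T : Tab) (j c : ℕ) : Option ℕ :=
  if j ≤ c then (T.getD j [])[c - j]? else none

lemma getD_eq_get?' (T : Tab) (j : ℕ) : T.getD j [] = (T[j]?).getD [] := by
  simp [List.getD]

lemma getD_of_len_le {T : Tab} {j : ℕ} (h : T.length ≤ j) : T.getD j [] = [] := by
  rw [getD_eq_get?', List.getElem?_eq_none_iff.2 h]; rfl

lemma lt_length_of_getD_ne {T : Tab} {j : ℕ} (h : T.getD j [] ≠ []) : j < T.length := by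
  by_contra hc
  exact h (getD_of_len_le (le_of_not_gt hc))

lemma getD_set_ne (T : Tab) (i j : ℕ) (r : List ℕ) (h : i ≠ j) :
    (T.set i r).getD j [] = T.getD j [] := by
  rw [getD_eq_get?', getD_eq_get?']
  rw [List.getElem?_set_ne h]

lemma getD_set_self {T : Tab} {i : ℕ} (r : List ℕ) (h : i < T.length) :
    (T.set i r).getD i [] = r := by
  rw [getD_eq_get?', List.getElem?_set_self h]; rfl

lemma tw_all {p : ℕ → Bool} : ∀ {l : List ℕ}, (∀ y ∈ l, p y) →
    l.takeWhile p = l ∧ l.dropWhile p = []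
  | [], _ => ⟨rfl, rfl⟩
  | x :: xs, h => by
    have hx : p x := h x (by simp)
    have ih := tw_all (l := xs) (fun y hy => h y (by simp [hy]))
    constructor
    · simp [List.takeWhile, hx, ih.1]
    · simp [List.dropWhile, hx, ih.2]

lemma tw_split {p : ℕ → Bool} {z : ℕ} (hz : ¬ p z) :
    ∀ {l : List ℕ} (t : List ℕ), (∀ y ∈ l, p y) →
    (l ++ z :: t).takeWhile p = l ∧ (l ++ z :: t).dropWhile p = z :: t
  | [], t, _ => by
    constructor
    · simp [List.takeWhile, hz]
    · simp [List.dropWhile, hz]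
  | x :: xs, t, h => by
    have hx : p x := h x (by simp)
    have ih := tw_split hz (l := xs) t (fun y hy => h y (by simp [hy]))
    constructor
    · simp only [List.cons_append, List.takeWhile, hx]
      simp [ih.1]
    · simp only [List.cons_append, List.dropWhile, hx]
      simp [ih.2]

lemma dropWhile_eq_drop (p : ℕ → Bool) :
    ∀ l : List ℕ, l.dropWhile p = l.drop (l.takeWhile p).length
  | [] => rfl
  | x :: xs => by
    by_cases hx : p x
    · simp [List.dropWhile, List.takeWhile, hx, dropWhile_eq_drop p xs]
    · simp [List.dropWhile, List.takeWhile, hx]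

lemma dropWhile_head_false {p : ℕ → Bool} {l rest : List ℕ} {b : ℕ}
    (h : l.dropWhile p = b :: rest) : ¬ p b := by
  induction l with
  | nil => simp at h
  | cons x xs ih =>
    by_cases hx : p x
    · exact ih (by simpa [List.dropWhile, hx] using h)
    · simp only [List.dropWhile, hx] at h
      rw [show x = b by simpa using congrArg List.head? h] at hx
      simpa using hx

lemma dropWhile_nil_all {p : ℕ → Bool} {l : List ℕ} (h : l.dropWhile p = []) :
    ∀ y ∈ l, p y := by
  intro y hy
  have := List.takeWhile_append_dropWhile (p := p) (l := l)
  rw [h, List.append_nil] at this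
  exact List.mem_takeWhile_imp (by rw [this]; exact hy)

lemma takeWhile_get? {p : ℕ → Bool} {l : List ℕ} {j : ℕ}
    (hj : j < (l.takeWhile p).length) :
    ∃ y, l[j]? = some y ∧ p y := by
  obtain ⟨t, ht⟩ := List.takeWhile_prefix (l := l) p
  have hy : (l.takeWhile p)[j]? = some ((l.takeWhile p).get ⟨j, hj⟩) :=
    List.getElem?_eq_getElem hj
  refine ⟨(l.takeWhile p).get ⟨j, hj⟩, ?_, List.mem_takeWhile_imp (List.mem_of_getElem? hy)⟩
  conv_lhs => rw [← ht]
  rw [List.getElem?_append_left hj, hy]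

lemma get?_drop' (l : List ℕ) (n j : ℕ) : (l.drop n)[j]? = l[n + j]? :=
  List.getElem?_drop

end Helpers

section Helpers2

open List

lemma get?_eq_some_getD {T : Tab} {i : ℕ} (h : i < T.length) :
    T[i]? = some (T.getD i []) := by
  have hy : T[i]? = some (T.get ⟨i, h⟩) := List.getElem?_eq_getElem h
  rw [hy, getD_eq_get?', hy]
  rfl

lemma getD_eq_get {T : Tab} {j : ℕ} (h : j < T.length) : T.getD j [] = T.get ⟨j, h⟩ := by
  rw [getD_eq_get?', List.getElem?_eq_getElem h]
  rfl

lemma lenchain_getD {T : Tab}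
    (hlen : List.Chain' (fun r s : List ℕ => s.length < r.length) T)
    {j : ℕ} (h : j + 1 < T.length) :
    (T.getD (j+1) []).length < (T.getD j []).length := by
  have := List.isChain_iff_getElem.1 hlen j (by omega)
  rwa [getD_eq_get (by omega : j < T.length), getD_eq_get h]

lemma pairwise_get?_lt {l : List ℕ} (h : List.Pairwise (· < ·) l) {i j : ℕ} {u v : ℕ}
    (hij : i < j) (hu : l[i]? = some u) (hv : l[j]? = some v) : u < v := by
  obtain ⟨hi, hu'⟩ := List.getElem?_eq_some_iff.1 hu
  obtain ⟨hj, hv'⟩ := List.getElem?_eq_some_iff.1 hv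
  rw [← hu', ← hv']
  exact List.pairwise_iff_get.1 h ⟨i, hi⟩ ⟨j, hj⟩ hij

lemma fm_down {f : ℕ → Option ℕ} (hcl : ∀ j, f (j+1) ≠ none → f j ≠ none) :
    ∀ d i, f (i + d) ≠ none → f i ≠ none := by
  intro d
  induction d with
  | zero => intro i h; exact h
  | succ d ih =>
    intro i h
    exact ih i (hcl _ (by rwa [show i + d + 1 = i + (d+1) by omega]))

lemma fm {f : ℕ → Option ℕ} (hcl : ∀ j, f (j+1) ≠ none → f j ≠ none) :
    ∀ n, ∃ m, m ≤ n ∧ (∀ j < m, ∃ y, f j = some y) ∧ (∀ j, m ≤ j → j < n → f j = none) ∧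
      ((List.range n).filterMap f).length = m ∧
      (∀ j < m, ((List.range n).filterMap f)[j]? = f j) := by
  intro n
  induction n with
  | zero =>
    refine ⟨0, le_rfl, by omega, by omega, by simp, by omega⟩
  | succ n ih =>
    obtain ⟨m, hm, hsome, hnone, hlen, hget⟩ := ih
    by_cases hn : f n = none
    · refine ⟨m, by omega, hsome, ?_, ?_, ?_⟩
      · intro j hj hj'
        rcases Nat.lt_or_ge j n with h' | h'
        · exact hnone j hj h'
        · have : j = n := by omega
          rw [this]; exact hn
      · rw [List.range_succ, List.filterMap_append]
        simp [hn, hlen]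
      · intro j hj
        rw [List.range_succ, List.filterMap_append]
        rw [show List.filterMap f [n] = [] by simp [hn], List.append_nil]
        exact hget j hj
    · have hall : ∀ j ≤ n, f j ≠ none := by
        intro j hj
        exact fm_down hcl (n - j) j (by rwa [show j + (n - j) = n by omega])
      have hmn : m = n := by
        by_contra hne
        have hlt : m < n := by omega
        exact hall m (by omega) (hnone m le_rfl hlt)
      obtain ⟨y, hy⟩ := Option.ne_none_iff_exists'.1 hn
      refine ⟨n + 1, by omega, ?_, by omega, ?_, ?_⟩
      · intro j hj
        rcases Nat.lt_or_ge j n with h' | h'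
        · exact hsome j (by omega)
        · have : j = n := by omega
          rw [this]; exact ⟨y, hy⟩
      · rw [List.range_succ, List.filterMap_append]
        rw [show List.filterMap f [n] = [y] by simp [hy]]
        simp [hlen, hmn]
      · intro j hj
        rw [List.range_succ, List.filterMap_append]
        rcases Nat.lt_or_ge j n with h' | h'
        · rw [List.getElem?_append_left (by rw [hlen, hmn]; exact h')]
          exact hget j (by omega)
        · rw [show List.filterMap f [n] = [y] by simp [hy]]
          have hj' : j = n := by omega
          rw [hj']
          have hL : (List.filterMap f (List.range n)).length = n := by rw [hlen, hmn]
          have hcat : (List.filterMap f (List.range n) ++ [y])[(List.filterMap f (List.range n)).length]? = some y :=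
            List.getElem?_concat_length
          rw [hL] at hcat
          rw [hcat, hy]

lemma colList_eq (T : Tab) (c : ℕ) :
    colList T c = (List.range (c+1)).filterMap (fun i => ent T i c) := by
  unfold colList
  apply List.filterMap_congr
  intro i hi
  have hic : i ≤ c := by
    have := List.mem_range.1 hi; omega
  unfold ent
  rw [if_pos hic]
  rcases Nat.lt_or_ge i T.length with h | h
  · rw [get?_eq_some_getD h]; rfl
  · rw [List.getElem?_eq_none_iff.2 h, getD_of_len_le h]
    rfl

lemma ent_closure {T : Tab}
    (hlen : List.Chain' (fun r s : List ℕ => s.length < r.length) T) (c : ℕ) :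
    ∀ j, ent T (j+1) c ≠ none → ent T j c ≠ none := by
  intro j h
  unfold ent at h ⊢
  by_cases hjc : j + 1 ≤ c
  · rw [if_pos hjc] at h
    rw [if_pos (by omega)]
    have h1 : c - (j+1) < (T.getD (j+1) []).length := by
      by_contra hc
      exact h (List.getElem?_eq_none_iff.2 (by omega))
    have hne : T.getD (j+1) [] ≠ [] := by
      intro he; rw [he] at h1; simp at h1
    have hj1 : j + 1 < T.length := lt_length_of_getD_ne hne
    have hlt : (T.getD (j+1) []).length < (T.getD j []).length := lenchain_getD hlen hj1
    intro hc
    have := List.getElem?_eq_none_iff.1 hc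
    omega
  · rw [if_neg hjc] at h
    exact absurd rfl h

lemma ent_eq_some {T : Tab} {j c y : ℕ} :
    ent T j c = some y ↔ j ≤ c ∧ (T.getD j [])[c - j]? = some y := by
  unfold ent
  by_cases h : j ≤ c
  · simp [h]
  · simp [h]

/-- Structure of `colList`. -/
lemma colStruct {T : Tab} (hlen : List.Chain' (fun r s : List ℕ => s.length < r.length) T)
    (c : ℕ) :
    (colList T c).length ≤ c + 1 ∧
    (∀ j < (colList T c).length, (colList T c)[j]? = ent T j c) ∧
    (∀ j, (colList T c).length ≤ j → ent T j c = none) := by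
  obtain ⟨m, hm, hsome, hnone, hlen', hget⟩ :=
    fm (f := fun j => ent T j c) (fun j h => ent_closure hlen c j h) (c+1)
  rw [colList_eq] at *
  have hmm : (List.filterMap (fun i => ent T i c) (List.range (c + 1))).length = m := hlen'
  refine ⟨by omega, ?_, ?_⟩
  · intro j hj; exact hget j (by omega)
  · intro j hj
    rcases Nat.lt_or_ge j (c+1) with h | h
    · exact hnone j (by omega) h
    · unfold ent; rw [if_neg (by omega)]

lemma len_bound {T : Tab}
    (hlen : List.Chain' (fun r s : List ℕ => s.length < r.length) T) :
    ∀ j, j < T.length → (T.getD j []).length + j ≤ (T.getD 0 []).length := by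
  intro j
  induction j with
  | zero => intro; omega
  | succ j ih =>
    intro hj
    have hlt : (T.getD (j+1) []).length < (T.getD j []).length := lenchain_getD hlen hj
    have := ih (by omega)
    omega

lemma set_eq_self_of_get? {l : List ℕ} {i : ℕ} {v : ℕ} (h : l[i]? = some v) :
    l.set i v = l := by
  induction l generalizing i with
  | nil => simp at h
  | cons x xs ih =>
    cases i with
    | zero => simp at h; simp [h]
    | succ i =>
      rw [List.getElem?_cons_succ] at h
      rw [List.set_cons_succ, ih h]

lemma lenchain_set {T : Tab} {i : ℕ} {r : List ℕ}
    (h : r.length = (T.getD i []).length)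
    (hc : List.Chain' (fun r s : List ℕ => s.length < r.length) T) :
    List.Chain' (fun r s : List ℕ => s.length < r.length) (T.set i r) := by
  have key : (T.set i r).map List.length = T.map List.length := by
    rw [List.map_set]
    rcases Nat.lt_or_ge i T.length with h' | h'
    · apply set_eq_self_of_get?
      rw [List.getElem?_map, get?_eq_some_getD h', h]
      rfl
    · rw [List.set_eq_of_length_le (by simpa using h')]
  have hmc : List.Chain' (fun a b : ℕ => b < a) (T.map List.length) :=
    (List.isChain_map _).2 hc
  rw [← key] at hmc
  have := (List.isChain_map (fun l : List ℕ => l.length)).1 hmc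
  exact this

lemma extT_length {T : Tab} (h : T ≠ []) (γ : ℕ) : (extT T γ).length = T.length := by
  obtain ⟨t0, ts, rfl⟩ := List.exists_cons_of_ne_nil h
  simp [extT]

lemma extT_ne_nil (T : Tab) (γ : ℕ) : extT T γ ≠ [] := by simp [extT]

lemma getD_extT_zero (T : Tab) (γ : ℕ) : (extT T γ).getD 0 [] = T.getD 0 [] ++ [γ] := rfl

lemma getD_extT {T : Tab} (h : T ≠ []) (γ : ℕ) {j : ℕ} (hj : 1 ≤ j) :
    (extT T γ).getD j [] = T.getD j [] := by
  obtain ⟨t0, ts, rfl⟩ := List.exists_cons_of_ne_nil h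
  obtain ⟨k, rfl⟩ := Nat.exists_eq_add_of_le hj
  simp [extT, List.getD_cons_succ, Nat.add_comm 1 k]

lemma set_extT {T : Tab} (h : T ≠ []) {i : ℕ} (hi : 1 ≤ i) (r : List ℕ) (γ : ℕ) :
    (extT T γ).set i r = extT (T.set i r) γ := by
  obtain ⟨t0, ts, rfl⟩ := List.exists_cons_of_ne_nil h
  obtain ⟨k, rfl⟩ := Nat.exists_eq_add_of_le hi
  simp [extT, List.getD_cons_succ, Nat.add_comm 1 k]

lemma append_extT {T : Tab} (h : T ≠ []) (r : List ℕ) (γ : ℕ) :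
    extT T γ ++ [r] = extT (T ++ [r]) γ := by
  obtain ⟨t0, ts, rfl⟩ := List.exists_cons_of_ne_nil h
  simp [extT]

lemma updRow_extT {T : Tab} (h : T ≠ []) {i : ℕ} (hi : 1 ≤ i) (r : List ℕ) (γ : ℕ) :
    updRow (extT T γ) i r = extT (updRow T i r) γ := by
  unfold updRow
  rw [extT_length h]
  by_cases h' : i < T.length
  · rw [if_pos h', if_pos h', set_extT h hi]
  · rw [if_neg h', if_neg h', append_extT h]

lemma ent_extT {T : Tab} (h : T ≠ []) {c : ℕ} (hc : c < (T.getD 0 []).length) (γ : ℕ)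
    (i : ℕ) : ent (extT T γ) i c = ent T i c := by
  unfold ent
  by_cases hic : i ≤ c
  · rw [if_pos hic, if_pos hic]
    cases i with
    | zero =>
      rw [getD_extT_zero, List.getElem?_append_left (by simpa using hc)]
    | succ i =>
      rw [getD_extT h γ (by omega)]
  · rw [if_neg hic, if_neg hic]

lemma colList_extT {T : Tab} (h : T ≠ []) {c : ℕ} (hc : c < (T.getD 0 []).length) (γ : ℕ) :
    colList (extT T γ) c = colList T c := by
  rw [colList_eq, colList_eq]
  apply List.filterMap_congr
  intro i _
  exact ent_extT h hc γ i

lemma getD_zero_updRow {T : Tab} (h : T ≠ []) {i : ℕ} (hi : 1 ≤ i) (r : List ℕ) :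
    (updRow T i r).getD 0 [] = T.getD 0 [] := by
  unfold updRow
  by_cases h' : i < T.length
  · rw [if_pos h', getD_set_ne _ _ _ _ (by omega)]
  · rw [if_neg h']
    obtain ⟨t0, ts, rfl⟩ := List.exists_cons_of_ne_nil h
    simp

lemma updRow_ne_nil {T : Tab} (h : T ≠ []) (i : ℕ) (r : List ℕ) : updRow T i r ≠ [] := by
  unfold updRow
  by_cases h' : i < T.length
  · rw [if_pos h']
    intro hc
    have hlen0 : (T.set i r).length = 0 := by rw [hc]; rfl
    rw [List.length_set] at hlen0
    omega
  · rw [if_neg h']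
    simp

lemma set_ne_nil {T : Tab} (h : T ≠ []) (i : ℕ) (r : List ℕ) : T.set i r ≠ [] := by
  intro hc
  have hlen0 : (T.set i r).length = 0 := by rw [hc]; rfl
  rw [List.length_set] at hlen0
  exact h (List.length_eq_zero_iff.1 hlen0)

end Helpers2

section ColMain

open List

lemma sfx_get_lt {l : List ℕ} {d : ℕ} (hp : List.Pairwise (· < ·) (l.drop d)) {u v : ℕ}
    (h1 : l[d]? = some u) (h2 : l[d+1]? = some v) : u < v := by
  apply pairwise_get?_lt hp (show (0:ℕ) < 1 by omega)
  · rw [get?_drop']; simpa using h1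
  · rw [get?_drop']; exact h2

lemma ent_down {T : Tab} (hlen : List.Chain' (fun r s : List ℕ => s.length < r.length) T)
    {j j' c : ℕ} (hj : j ≤ j') (h : ent T j' c ≠ none) : ent T j c ≠ none := by
  have := fm_down (f := fun i => ent T i c) (fun i hi => ent_closure hlen c i hi) (j' - j) j
  exact this (by rwa [show j + (j' - j) = j' by omega])

lemma ent_none_len {T : Tab} {j c : ℕ} (hjc : j ≤ c) (h : ent T j c = none) :
    (T.getD j []).length ≤ c - j := by
  unfold ent at h
  rw [if_pos hjc] at h
  exact List.getElem?_eq_none_iff.1 h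

lemma row0_ent {T : Tab} {L0 c : ℕ} (hT0 : (T.getD 0 []).length = L0 + 1) (hc : c ≤ L0) :
    ∃ y, ent T 0 c = some y ∧ y ∈ T.getD 0 [] := by
  have hlt : c < (T.getD 0 []).length := by omega
  obtain ⟨y, hy⟩ : ∃ y, (T.getD 0 [])[c]? = some y := ⟨_, List.getElem?_eq_getElem hlt⟩
  refine ⟨y, ?_, List.mem_of_getElem? hy⟩
  rw [ent_eq_some]
  exact ⟨Nat.zero_le c, by simpa using hy⟩

lemma ent_set_ne {T : Tab} {k j c' : ℕ} (h : j ≠ k) (r : List ℕ) :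
    ent (T.set k r) j c' = ent T j c' := by
  unfold ent
  rw [getD_set_ne _ _ _ _ (fun he => h he.symm)]

lemma ent_set_col {T : Tab} {k c c' x : ℕ} (hkT : k < T.length) (hkc : k ≤ c) (hne : c ≠ c') :
    ent (T.set k ((T.getD k []).set (c - k) x)) k c' = ent T k c' := by
  unfold ent
  by_cases h : k ≤ c'
  · rw [if_pos h, if_pos h, getD_set_self _ hkT]
    rw [List.getElem?_set_ne (by omega)]
  · rw [if_neg h, if_neg h]

/-- Propagation of the append-validity condition to the next column. -/
lemma key_prop {L0 : ℕ} {T₂ : Tab} {c v k : ℕ}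
    (hlen₂ : List.Chain' (fun r s : List ℕ => s.length < r.length) T₂)
    (hT0₂ : (T₂.getD 0 []).length = L0 + 1)
    (hc1 : c + 1 ≤ L0)
    (hkc : k ≤ c)
    (hentk : ent T₂ k c ≠ none)
    (hgt : ∀ u, ent T₂ k (c+1) = some u → v ≤ u) :
    (colList T₂ (c+1)).dropWhile (fun y => decide (y < v)) = [] →
      1 ≤ (colList T₂ (c+1)).length ∧
      (T₂.getD (colList T₂ (c+1)).length []).length = (c+1) - (colList T₂ (c+1)).length ∧
      (colList T₂ (c+1)).length ≤ c + 1 := by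
  intro hdw2
  have hall2 : ∀ y ∈ colList T₂ (c+1), y < v := by
    intro y hy
    have := dropWhile_nil_all hdw2 y hy
    simpa using this
  obtain ⟨hcle2, hstr2, hnone2⟩ := colStruct hlen₂ (c+1)
  have hk2 : ent T₂ k (c+1) = none := by
    by_contra hne
    obtain ⟨u, hu⟩ := Option.ne_none_iff_exists'.1 hne
    have hvu : v ≤ u := hgt u hu
    have humem : u ∈ colList T₂ (c+1) := by
      rcases Nat.lt_or_ge k (colList T₂ (c+1)).length with h' | h'
      · exact List.mem_of_getElem? (by rw [hstr2 k h']; exact hu)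
      · rw [hnone2 k h'] at hu; simp at hu
    have := hall2 u humem
    omega
  have hm'k : (colList T₂ (c+1)).length ≤ k := by
    by_contra h'
    have h2 := hstr2 k (by omega)
    rw [hk2] at h2
    have := List.getElem?_eq_none_iff.1 h2
    omega
  set m' := (colList T₂ (c+1)).length with hm'
  have hne0 : ent T₂ m' c ≠ none := ent_down hlen₂ hm'k hentk
  obtain ⟨w, hw⟩ := Option.ne_none_iff_exists'.1 hne0
  obtain ⟨hm'c, hwg⟩ := ent_eq_some.1 hw
  have hwlt : c - m' < (T₂.getD m' []).length := (List.getElem?_eq_some_iff.1 hwg).1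
  have hlenle : (T₂.getD m' []).length ≤ c + 1 - m' :=
    ent_none_len (by omega) (hnone2 m' le_rfl)
  have hm1 : 1 ≤ m' := by
    rcases Nat.eq_zero_or_pos m' with h0 | h0
    · obtain ⟨y0, hy0, _⟩ := row0_ent hT0₂ hc1
      rw [hnone2 0 (by omega)] at hy0
      simp at hy0
    · exact h0
  exact ⟨hm1, by omega, by omega⟩

lemma col_head_facts {L0 : ℕ} {T : Tab} {c x b : ℕ} {rest : List ℕ}
    (hT0 : (T.getD 0 []).length = L0 + 1)
    (hrow0 : ∀ y ∈ T.getD 0 [], y < x)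
    (hlen : List.Chain' (fun r s : List ℕ => s.length < r.length) T)
    (hlen1 : ∀ j, 1 ≤ j → j < T.length → (T.getD j []).length + j ≤ L0)
    (hcL0 : c ≤ L0)
    (hdw : (colList T c).dropWhile (fun y => decide (y < x)) = b :: rest) :
    x ≤ b ∧ ent T ((colList T c).takeWhile (fun y => decide (y < x))).length c = some b ∧
      1 ≤ ((colList T c).takeWhile (fun y => decide (y < x))).length ∧
      ((colList T c).takeWhile (fun y => decide (y < x))).length ≤ c ∧
      ((colList T c).takeWhile (fun y => decide (y < x))).length < T.length ∧
      c - ((colList T c).takeWhile (fun y => decide (y < x))).length <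
        (T.getD ((colList T c).takeWhile (fun y => decide (y < x))).length []).length ∧
      c + 1 ≤ L0 := by
  set p : ℕ → Bool := fun y => decide (y < x) with hp
  set L := colList T c with hL
  set k := (L.takeWhile p).length with hk
  have hbx : x ≤ b := by
    have := dropWhile_head_false hdw
    simp [hp] at this
    omega
  have hdrop := dropWhile_eq_drop p L
  rw [hdw] at hdrop
  have hget : L[k]? = some b := by
    have h0 : (L.drop k)[0]? = some b := by rw [← hdrop]; rfl
    rwa [get?_drop', Nat.add_zero] at h0
  have hkL : k < L.length := by
    have h1 : (L.drop k).length = rest.length + 1 := by rw [← hdrop]; simp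
    have h2 := (List.length_drop : (L.drop k).length = L.length - k)
    omega
  obtain ⟨hcle, hstr, hnone⟩ := colStruct hlen c
  have hentk : ent T k c = some b := by rw [← hstr k hkL]; exact hget
  have hk1 : 1 ≤ k := by
    rcases Nat.eq_zero_or_pos k with h0 | h0
    · obtain ⟨y0, hy0, hy0m⟩ := row0_ent hT0 hcL0
      rw [h0] at hentk
      rw [hy0] at hentk
      have hby : y0 = b := by injection hentk
      have := hrow0 y0 hy0m
      omega
    · exact h0
  obtain ⟨hkc, hgk⟩ := ent_eq_some.1 hentk
  have hklt : c - k < (T.getD k []).length := (List.getElem?_eq_some_iff.1 hgk).1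
  have hkT : k < T.length := by
    apply lt_length_of_getD_ne
    intro he
    rw [he] at hklt
    simp at hklt
  have hc1 : c + 1 ≤ L0 := by
    have := hlen1 k hk1 hkT
    omega
  exact ⟨hbx, hentk, hk1, hkc, hkT, hklt, hc1⟩

lemma col_append {L0 : ℕ} {T : Tab} {c x : ℕ}
    (hTne : T ≠ [])
    (hT0 : (T.getD 0 []).length = L0 + 1)
    (hcL0 : c ≤ L0)
    (hdw : (colList T c).dropWhile (fun y => decide (y < x)) = [])
    (hKEY : 1 ≤ (colList T c).length ∧
      (T.getD (colList T c).length []).length = c - (colList T c).length ∧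
      (colList T c).length ≤ c) :
    ∃ T' pos, InsCol T c x T' pos true ∧
      (∀ γ, InsCol (extT T γ) c x (extT T' γ) pos true) ∧
      T'.getD 0 [] = T.getD 0 [] ∧ T' ≠ [] := by
  obtain ⟨hk1, hklen, hkc⟩ := hKEY
  set k := (colList T c).length with hk
  refine ⟨updRow T k ((T.getD k []) ++ [x]), (k, c), ?_, ?_, ?_, ?_⟩
  · exact InsCol.append T c x k hdw rfl hklen hkc
  · intro γ
    have hext : colList (extT T γ) c = colList T c := colList_extT hTne (by omega) γ
    have hrowk : (extT T γ).getD k [] = T.getD k [] := getD_extT hTne γ hk1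
    have h2 : k = (colList (extT T γ) c).length := by rw [hext]
    have := InsCol.append (extT T γ) c x k (by rw [hext]; exact hdw) h2
      (by rw [hrowk]; omega) hkc
    rw [hrowk] at this
    rwa [updRow_extT hTne hk1] at this
  · exact getD_zero_updRow hTne hk1 _
  · exact updRow_ne_nil hTne _ _

lemma col_main (L0 : ℕ) : ∀ (n : ℕ) (T : Tab) (c x : ℕ),
    c + n = L0 →
    T ≠ [] →
    (T.getD 0 []).length = L0 + 1 →
    (∀ y ∈ T.getD 0 [], y < x) →
    List.Chain' (fun r s : List ℕ => s.length < r.length) T →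
    (∀ j, 1 ≤ j → j < T.length → (T.getD j []).length + j ≤ L0) →
    (∀ j, 1 ≤ j → List.Pairwise (· < ·) ((T.getD j []).drop (c - j))) →
    (∀ i k u v, c ≤ i + 1 + k → (T.getD (i+1) [])[k]? = some u →
        (T.getD i [])[k+1]? = some v → v < u) →
    ((colList T c).dropWhile (fun y => decide (y < x)) = [] →
        1 ≤ (colList T c).length ∧
        (T.getD (colList T c).length []).length = c - (colList T c).length ∧
        (colList T c).length ≤ c) →
    ∃ T' pos, InsCol T c x T' pos true ∧
      (∀ γ, InsCol (extT T γ) c x (extT T' γ) pos true) ∧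
      T'.getD 0 [] = T.getD 0 [] ∧ T' ≠ [] := by
  intro n
  induction n with
  | zero =>
    intro T c x hc hTne hT0 hrow0 hlen hlen1 hsfx hcols hKEY
    cases hdw : (colList T c).dropWhile (fun y => decide (y < x)) with
    | nil => exact col_append hTne hT0 (by omega) hdw (hKEY hdw)
    | cons b rest =>
      have := (col_head_facts hT0 hrow0 hlen hlen1 (by omega) hdw).2.2.2.2.2.2
      omega
  | succ n ih =>
    intro T c x hc hTne hT0 hrow0 hlen hlen1 hsfx hcols hKEY
    cases hdw : (colList T c).dropWhile (fun y => decide (y < x)) with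
    | nil => exact col_append hTne hT0 (by omega) hdw (hKEY hdw)
    | cons b rest =>
      obtain ⟨hbx, hentk, hk1, hkc, hkT, hklt, hc1⟩ :=
        col_head_facts hT0 hrow0 hlen hlen1 (by omega) hdw
      set p : ℕ → Bool := fun y => decide (y < x) with hp
      set k := ((colList T c).takeWhile p).length with hk
      obtain ⟨hkc', hgk⟩ := ent_eq_some.1 hentk
      have hsk := hsfx k hk1
      by_cases hbeq : b = x
      · -- EQUAL case
        have hdw' : (colList T c).dropWhile p = x :: rest := by rw [← hbeq]; exact hdw
        have hgk' : (T.getD k [])[c - k]? = some x := by rw [← hbeq]; exact hgk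
        have hgt : ∀ u, ent T k (c+1) = some u → x + 1 ≤ u := by
          intro u hu
          obtain ⟨_, hu2⟩ := ent_eq_some.1 hu
          have : x < u := by
            apply sfx_get_lt hsk hgk'
            rwa [show c - k + 1 = c + 1 - k by omega]
          omega
        obtain ⟨T', pos, hins, htwin, hpres, hne'⟩ := ih T (c+1) (x+1)
          (by omega) hTne hT0 (fun y hy => by have := hrow0 y hy; omega) hlen hlen1
          (by
            intro j hj
            have h1 : (T.getD j []).drop (c+1-j) =
                ((T.getD j []).drop (c-j)).drop ((c+1-j)-(c-j)) := by
              rw [List.drop_drop]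
              congr 1
              omega
            rw [h1]
            exact (hsfx j hj).sublist (List.drop_sublist _ _))
          (fun i k' u v hcol h1 h2 => hcols i k' u v (by omega) h1 h2)
          (key_prop hlen hT0 hc1 hkc (by
            rw [show ent T k c = some x by rw [← hbeq]; exact hentk]; simp) hgt)
        refine ⟨T', pos, InsCol.equal T c x rest T' pos true hdw' hins, ?_, hpres, hne'⟩
        intro γ
        have hext : colList (extT T γ) c = colList T c := colList_extT hTne (by omega) γ
        exact InsCol.equal (extT T γ) c x rest (extT T' γ) pos true
          (by rw [hext]; exact hdw') (htwin γ)
      · -- BUMP case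
        have hxb : x < b := by omega
        set T₂ := T.set k ((T.getD k []).set (c - k) x) with hT₂
        have hT₂len : T₂.length = T.length := by rw [hT₂, List.length_set]
        have hrowk₂ : T₂.getD k [] = (T.getD k []).set (c - k) x := getD_set_self _ hkT
        have hgetD₂ : ∀ j, j ≠ k → T₂.getD j [] = T.getD j [] := by
          intro j hj
          exact getD_set_ne _ _ _ _ (fun he => hj he.symm)
        have hT₂ne : T₂ ≠ [] := set_ne_nil hTne _ _
        have hT0₂ : (T₂.getD 0 []).length = L0 + 1 := by
          rw [hgetD₂ 0 (by omega)]; exact hT0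
        have hrow0₂ : ∀ y ∈ T₂.getD 0 [], y < b := by
          rw [hgetD₂ 0 (by omega)]
          intro y hy
          have := hrow0 y hy
          omega
        have hlen₂ : List.Chain' (fun r s : List ℕ => s.length < r.length) T₂ :=
          lenchain_set (by rw [List.length_set]) hlen
        have hlen1₂ : ∀ j, 1 ≤ j → j < T₂.length → (T₂.getD j []).length + j ≤ L0 := by
          intro j hj hjT
          rw [hT₂len] at hjT
          by_cases hjk : j = k
          · rw [hjk] at hjT
            rw [hjk, hrowk₂, List.length_set]
            exact hlen1 k hk1 hjT
          · rw [hgetD₂ j hjk]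
            exact hlen1 j hj hjT
        have hsfx₂ : ∀ j, 1 ≤ j → List.Pairwise (· < ·) ((T₂.getD j []).drop (c+1-j)) := by
          intro j hj
          by_cases hjk : j = k
          · rw [hjk, hrowk₂, show c + 1 - k = (c - k) + 1 by omega,
              List.drop_set_of_lt (by omega)]
            have h1 : (T.getD k []).drop ((c-k)+1) = ((T.getD k []).drop (c-k)).drop 1 := by
              rw [List.drop_drop] <;> try (congr 1; omega)
            rw [h1]
            exact hsk.sublist (List.drop_sublist _ _)
          · rw [hgetD₂ j hjk]
            have h1 : (T.getD j []).drop (c+1-j) =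
                ((T.getD j []).drop (c-j)).drop ((c+1-j)-(c-j)) := by
              rw [List.drop_drop]
              congr 1
              omega
            rw [h1]
            exact (hsfx j hj).sublist (List.drop_sublist _ _)
        have hcols₂ : ∀ i k' u v, c+1 ≤ i + 1 + k' → (T₂.getD (i+1) [])[k']? = some u →
            (T₂.getD i [])[k'+1]? = some v → v < u := by
          intro i k' u v hcol h1 h2
          apply hcols i k' u v (by omega)
          · by_cases hik : i + 1 = k
            · rw [hik, hrowk₂] at h1
              rw [List.getElem?_set_ne (by omega : c - k ≠ k')] at h1
              rw [hik]
              exact h1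
            · rwa [hgetD₂ (i+1) hik] at h1
          · by_cases hik : i = k
            · rw [hik, hrowk₂] at h2
              rw [List.getElem?_set_ne (by omega : c - k ≠ k' + 1)] at h2
              rw [hik]
              exact h2
            · rwa [hgetD₂ i hik] at h2
        have hentk₂ : ent T₂ k c = some x := by
          rw [ent_eq_some]
          refine ⟨hkc, ?_⟩
          rw [hrowk₂]
          exact List.getElem?_set_self hklt
        have hgt₂ : ∀ u, ent T₂ k (c+1) = some u → b ≤ u := by
          intro u hu
          rw [hT₂, ent_set_col hkT hkc (by omega)] at hu
          obtain ⟨_, hu2⟩ := ent_eq_some.1 hu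
          have : b < u := by
            apply sfx_get_lt hsk hgk
            rwa [show c - k + 1 = c + 1 - k by omega]
          omega
        obtain ⟨T', pos, hins, htwin, hpres, hne'⟩ := ih T₂ (c+1) b
          (by omega) hT₂ne hT0₂ hrow0₂ hlen₂ hlen1₂ hsfx₂ hcols₂
          (key_prop hlen₂ hT0₂ hc1 hkc (by rw [hentk₂]; exact Option.some_ne_none _) hgt₂)
        rw [hT₂] at hins
        refine ⟨T', pos, InsCol.bump T c x b k rest T' pos true hdw hxb hk hins, ?_, ?_, hne'⟩
        · intro γ
          apply InsCol.bump (extT T γ) c x b k rest (extT T' γ) pos true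
          · rw [colList_extT hTne (by omega) γ]; exact hdw
          · exact hxb
          · rw [colList_extT hTne (by omega) γ] <;> try exact hk
          · have e1 : (extT T γ).getD k [] = T.getD k [] := getD_extT hTne γ hk1
            rw [e1, set_extT hTne hk1]
            rw [← hT₂]
            exact htwin γ
        · rw [hpres]
          exact hgetD₂ 0 (by omega)

end ColMain

section RowMain

open List

lemma get?_append_mid {pre rest : List ℕ} {x b : ℕ} {m : ℕ} (hne : m ≠ pre.length) :
    (pre ++ x :: rest)[m]? = (pre ++ b :: rest)[m]? := by
  rcases Nat.lt_or_ge m pre.length with h | h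
  · rw [List.getElem?_append_left h, List.getElem?_append_left h]
  · have h' : pre.length < m := by omega
    rw [List.getElem?_append_right (by omega), List.getElem?_append_right (by omega)]
    have he : m - pre.length = (m - pre.length - 1) + 1 := by omega
    rw [he]
    simp

lemma get?_append_len {pre rest : List ℕ} {x : ℕ} :
    (pre ++ x :: rest)[pre.length]? = some x := by
  rw [List.getElem?_append_right le_rfl]
  simp

lemma pairwise_bump {pre rest : List ℕ} {x b : ℕ} (hx : ∀ u ∈ pre, u < x) (hxb : x < b)
    (hp : List.Pairwise (· < ·) (pre ++ b :: rest)) :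
    List.Pairwise (· < ·) (pre ++ x :: rest) := by
  rw [List.pairwise_append] at hp ⊢
  obtain ⟨h1, h2, h3⟩ := hp
  rw [List.pairwise_cons] at h2 ⊢
  refine ⟨h1, ⟨?_, h2.2⟩, ?_⟩
  · intro v hv
    have := h2.1 v hv
    omega
  · intro u hu v hv
    have hux := hx u hu
    rcases List.mem_cons.1 hv with h | h
    · omega
    · have := h2.1 v h
      omega

lemma row_append {T : Tab} {i x : ℕ}
    (hi : 1 ≤ i) (hTne : T ≠ [])
    (hdw : (T.getD i []).dropWhile (fun y => decide (y < x)) = []) :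
    ∃ T' pos pr, InsRow T i x T' pos pr ∧
      (∀ γ, InsRow (extT T γ) i x (extT T' γ) pos pr) ∧
      T'.getD 0 [] = T.getD 0 [] ∧ T' ≠ [] := by
  refine ⟨updRow T i ((T.getD i []) ++ [x]), (i, i + (T.getD i []).length), false,
    InsRow.append T i x (T.getD i []) rfl hdw, ?_, getD_zero_updRow hTne hi _,
    updRow_ne_nil hTne _ _⟩
  intro γ
  have e1 : (extT T γ).getD i [] = T.getD i [] := getD_extT hTne γ hi
  have := InsRow.append (extT T γ) i x (T.getD i []) e1.symm hdw
  rwa [updRow_extT hTne hi] at this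

lemma row_main (L0 : ℕ) : ∀ (n : ℕ) (T : Tab) (i x : ℕ),
    T.length ≤ i + n →
    1 ≤ i →
    T ≠ [] →
    (T.getD 0 []).length = L0 + 1 →
    (∀ y ∈ T.getD 0 [], y < x) →
    List.Chain' (fun r s : List ℕ => s.length < r.length) T →
    (∀ j, 1 ≤ j → j < T.length → (T.getD j []).length + j ≤ L0) →
    (∀ j, 1 ≤ j → List.Pairwise (· < ·) (T.getD j [])) →
    (∀ i' k u v, i ≤ i' + 1 + k → (T.getD (i'+1) [])[k]? = some u →
        (T.getD i' [])[k+1]? = some v → v < u) →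
    (∀ z, (T.getD i []).takeWhile (fun y => decide (y < x)) ≠ [] →
        (T.getD (i-1) [])[((T.getD i []).takeWhile (fun y => decide (y < x))).length + 1]?
          = some z → z < x) →
    ∃ T' pos pr, InsRow T i x T' pos pr ∧
      (∀ γ, InsRow (extT T γ) i x (extT T' γ) pos pr) ∧
      T'.getD 0 [] = T.getD 0 [] ∧ T' ≠ [] := by
  intro n
  induction n with
  | zero =>
    intro T i x hn hi hTne hT0 hrow0 hlen hlen1 hrows hcols hup
    cases hdw : (T.getD i []).dropWhile (fun y => decide (y < x)) with
    | nil => exact row_append hi hTne hdw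
    | cons b rest =>
      exfalso
      have hrne : T.getD i [] ≠ [] := by
        intro he
        rw [he] at hdw
        simp at hdw
      have := lt_length_of_getD_ne hrne
      omega
  | succ n ih =>
    intro T i x hn hi hTne hT0 hrow0 hlen hlen1 hrows hcols hup
    cases hdw : (T.getD i []).dropWhile (fun y => decide (y < x)) with
    | nil => exact row_append hi hTne hdw
    | cons b rest =>
      set p : ℕ → Bool := fun y => decide (y < x) with hp
      set r : List ℕ := T.getD i [] with hr
      have hbx : x ≤ b := by
        have := dropWhile_head_false hdw
        simp [hp] at this
        omega
      have hrne : r ≠ [] := by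
        intro he
        rw [he] at hdw
        simp at hdw
      have hiT : i < T.length := lt_length_of_getD_ne hrne
      set k : ℕ := (r.takeWhile p).length with hk
      have hdrop := dropWhile_eq_drop p r
      rw [hdw] at hdrop
      have hgetk : r[k]? = some b := by
        have h0 : (r.drop k)[0]? = some b := by rw [← hdrop]; rfl
        rwa [get?_drop', Nat.add_zero] at h0
      have hkr : k < r.length := by
        have h1 : (r.drop k).length = rest.length + 1 := by rw [← hdrop]; simp
        have h2 := (List.length_drop : (r.drop k).length = r.length - k)
        omega
      have hsplit : r.takeWhile p ++ b :: rest = r := by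
        conv_rhs => rw [← List.takeWhile_append_dropWhile (p := p) (l := r)]
        rw [hdw]
      have hri : List.Pairwise (· < ·) r := hrows i hi
      have hiL0 : i + 1 ≤ L0 := by
        have h1 := hlen1 i hi hiT
        rw [← hr] at h1
        have h2 : 1 ≤ r.length := by
          cases hr2 : r with
          | nil => exact absurd hr2 hrne
          | cons _ _ => simp
        omega
      by_cases hbeq : b = x
      · -- EQUAL case : insert x+1 into row i+1
        have hdw' : r.dropWhile p = x :: rest := by rw [← hbeq]; exact hdw
        have hgetk' : r[k]? = some x := by rw [← hbeq]; exact hgetk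
        have hup' : ∀ z, (T.getD (i+1) []).takeWhile (fun y => decide (y < x+1)) ≠ [] →
            (T.getD (i+1-1) [])[((T.getD (i+1) []).takeWhile (fun y => decide (y < x+1))).length + 1]? = some z →
            z < x + 1 := by
          intro z htw' hz
          set r' : List ℕ := T.getD (i+1) [] with hr'
          set k' : ℕ := (r'.takeWhile (fun y => decide (y < x+1))).length with hk'
          have hz' : r[k' + 1]? = some z := by
            rw [show i + 1 - 1 = i by omega] at hz
            exact hz
          have hk'1 : 1 ≤ k' := by
            have : r'.takeWhile (fun y => decide (y < x+1)) ≠ [] := htw'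
            rcases Nat.eq_zero_or_pos k' with h0 | h0
            · rw [hk'] at h0
              rw [List.length_eq_zero_iff] at h0
              exact absurd h0 this
            · exact h0
          -- elements of r at positions 1..k' are below entries of r' which are ≤ x
          have hsmall : ∀ j, j < k' → ∀ v, r[j+1]? = some v → v < x := by
            intro j hj v hv
            obtain ⟨u, hu, hpu⟩ := takeWhile_get? (p := fun y => decide (y < x+1))
              (l := r') (j := j) (by rw [← hk']; omega)
            have hux : u < x + 1 := by simpa using hpu
            have := hcols i j u v (by omega) (by rw [← hr']; exact hu) (by rw [← hr]; exact hv)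
            omega
          rcases Nat.eq_zero_or_pos k with hk0 | hk0
          · -- r[0]? = x ; but then r[1]? > x contradicting hsmall
            exfalso
            have hx0 : r[0]? = some x := by rw [← hk0]; exact hgetk'
            obtain ⟨u0, hu0, _⟩ := takeWhile_get? (p := fun y => decide (y < x+1))
              (l := r') (j := 0) (by rw [← hk']; omega)
            have hent1 : ent T (i+1) (i+1) = some u0 :=
              ent_eq_some.2 ⟨le_rfl, by rw [Nat.sub_self, ← hr']; exact hu0⟩
            have hclose : ent T i (i+1) ≠ none :=
              ent_closure hlen (i+1) i (by rw [hent1]; exact Option.some_ne_none _)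
            obtain ⟨w, hw⟩ := Option.ne_none_iff_exists'.1 hclose
            obtain ⟨_, hw2⟩ := ent_eq_some.1 hw
            have hw1 : r[1]? = some w := by
              rw [show i + 1 - i = 1 by omega] at hw2
              rw [hr]
              exact hw2
            have hwx : w < x := hsmall 0 (by omega) w hw1
            have : x < w := pairwise_get?_lt hri (show (0:ℕ) < 1 by omega) hx0 hw1
            omega
          · have hk'k : k' < k := by
              by_contra hge
              have := hsmall (k-1) (by omega) b (by
                rw [show k - 1 + 1 = k by omega]
                exact hgetk)
              omega
            rcases Nat.lt_or_ge (k'+1) k with hlt | hge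
            · have : z < x := by
                have := pairwise_get?_lt hri hlt hz' hgetk'
                omega
              omega
            · have hzk : k' + 1 = k := by omega
              rw [hzk, hgetk'] at hz'
              have : x = z := Option.some.inj hz'
              omega
        obtain ⟨T', pos, pr, hins, htwin, hpres, hne'⟩ := ih T (i+1) (x+1)
          (by omega) (by omega) hTne hT0
          (fun y hy => by have := hrow0 y hy; omega)
          hlen hlen1 hrows
          (fun i' k' u v hg h1 h2 => hcols i' k' u v (by omega) h1 h2)
          hup'
        refine ⟨T', pos, pr, InsRow.equal T i x rest T' pos pr hdw' hins, ?_, hpres, hne'⟩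
        intro γ
        exact InsRow.equal (extT T γ) i x rest (extT T' γ) pos pr
          (by rw [getD_extT hTne γ hi]; exact hdw') (htwin γ)
      · -- b > x
        have hxb : x < b := by omega
        rcases Nat.eq_zero_or_pos k with hk0 | hk0
        · -- diagonal cases : takeWhile = []
          have htw : r.takeWhile p = [] := by
            rw [← List.length_eq_zero_iff, ← hk, hk0]
          have hr_eq : r = b :: rest := by rw [← hsplit, htw]; rfl
          have hentii : ent T i i = some b := by
            rw [ent_eq_some]
            refine ⟨le_rfl, ?_⟩
            rw [← hr, Nat.sub_self, hr_eq]
            rfl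
          have hsfxc : ∀ j, 1 ≤ j → List.Pairwise (· < ·) ((T.getD j []).drop (i+1-j)) :=
            fun j hj => (hrows j hj).sublist (List.drop_sublist _ _)
          have hcolsc : ∀ i' k' u v, i+1 ≤ i' + 1 + k' → (T.getD (i'+1) [])[k']? = some u →
              (T.getD i' [])[k'+1]? = some v → v < u :=
            fun i' k' u v hg h1 h2 => hcols i' k' u v (by omega) h1 h2
          have hpairrest : List.Pairwise (· < ·) (b :: rest) := by rw [← hr_eq]; exact hri
          by_cases hpar : x % 2 = b % 2
          · -- bumpDiag
            set T₁ : Tab := T.set i (x :: rest) with hT₁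
            have hrowi₁ : T₁.getD i [] = x :: rest := getD_set_self _ hiT
            have hgetD₁ : ∀ j, j ≠ i → T₁.getD j [] = T.getD j [] :=
              fun j hj => getD_set_ne _ _ _ _ (fun he => hj he.symm)
            have hT₁ne : T₁ ≠ [] := set_ne_nil hTne _ _
            have hT0₁ : (T₁.getD 0 []).length = L0 + 1 := by
              rw [hgetD₁ 0 (by omega)]; exact hT0
            have hlen₁ : List.Chain' (fun r s : List ℕ => s.length < r.length) T₁ :=
              lenchain_set (by rw [← hr, hr_eq]; rfl) hlen
            have hT₁len : T₁.length = T.length := by rw [hT₁, List.length_set]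
            have hlen1₁ : ∀ j, 1 ≤ j → j < T₁.length → (T₁.getD j []).length + j ≤ L0 := by
              intro j hj hjT
              rw [hT₁len] at hjT
              by_cases hji : j = i
              · rw [hji, hrowi₁]
                have := hlen1 i hi hiT
                rw [← hr, hr_eq] at this
                simpa using this
              · rw [hgetD₁ j hji]
                exact hlen1 j hj hjT
            have hsfx₁ : ∀ j, 1 ≤ j →
                List.Pairwise (· < ·) ((T₁.getD j []).drop (i+1-j)) := by
              intro j hj
              by_cases hji : j = i
              · rw [hji, hrowi₁, show i + 1 - i = 1 by omega]
                simpa using hpairrest.of_cons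
              · rw [hgetD₁ j hji]
                exact (hrows j hj).sublist (List.drop_sublist _ _)
            have hrowi_hi : ∀ m, 1 ≤ m → (T₁.getD i [])[m]? = (T.getD i [])[m]? := by
              intro m hm
              rw [hrowi₁, ← hr, hr_eq]
              obtain ⟨m', rfl⟩ := Nat.exists_eq_add_of_le hm
              simp [Nat.add_comm 1 m']
            have hcols₁ : ∀ i' k' u v, i+1 ≤ i' + 1 + k' →
                (T₁.getD (i'+1) [])[k']? = some u →
                (T₁.getD i' [])[k'+1]? = some v → v < u := by
              intro i' k' u v hg h1 h2
              apply hcols i' k' u v (by omega)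
              · by_cases hik : i' + 1 = i
                · rw [hik] at h1 ⊢
                  rwa [hrowi_hi k' (by omega)] at h1
                · rwa [hgetD₁ (i'+1) hik] at h1
              · by_cases hik : i' = i
                · rw [hik] at h2 ⊢
                  rwa [hrowi_hi (k'+1) (by omega)] at h2
                · rwa [hgetD₁ i' hik] at h2
            have hentk₁ : ent T₁ i i = some x := by
              rw [ent_eq_some]
              exact ⟨le_rfl, by rw [hrowi₁, Nat.sub_self]; rfl⟩
            have hgt₁ : ∀ u, ent T₁ i (i+1) = some u → b ≤ u := by
              intro u hu
              obtain ⟨_, hu2⟩ := ent_eq_some.1 hu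
              rw [hrowi₁, show i + 1 - i = 1 by omega] at hu2
              have : u ∈ rest := by
                have := List.mem_of_getElem? (l := rest) (i := 0) (by simpa using hu2)
                exact this
              have := List.rel_of_pairwise_cons hpairrest this
              omega
            obtain ⟨T', pos, hins, htwin, hpres, hne'⟩ := col_main L0 (L0 - (i+1)) T₁ (i+1) b
              (by omega) hT₁ne hT0₁
              (by
                rw [hgetD₁ 0 (by omega)]
                intro y hy
                have := hrow0 y hy
                omega)
              hlen₁ hlen1₁ hsfx₁ hcols₁
              (key_prop hlen₁ hT0₁ hiL0 le_rfl
                (by rw [hentk₁]; exact Option.some_ne_none _) hgt₁)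
            rw [hT₁] at hins
            refine ⟨T', pos, true,
              InsRow.bumpDiag T i x b rest T' pos true htw hdw hxb hpar hins, ?_, ?_, hne'⟩
            · intro γ
              apply InsRow.bumpDiag (extT T γ) i x b rest (extT T' γ) pos true
              · rw [getD_extT hTne γ hi]; exact htw
              · rw [getD_extT hTne γ hi]; exact hdw
              · exact hxb
              · exact hpar
              · rw [set_extT hTne hi, ← hT₁]
                exact htwin γ
            · rw [hpres, hgetD₁ 0 (by omega)]
          · -- parity case
            have hgt₀ : ∀ u, ent T i (i+1) = some u → x + 2 ≤ u := by
              intro u hu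
              obtain ⟨_, hu2⟩ := ent_eq_some.1 hu
              rw [← hr, show i + 1 - i = 1 by omega, hr_eq] at hu2
              have : u ∈ rest := List.mem_of_getElem? (l := rest) (i := 0) (by simpa using hu2)
              have := List.rel_of_pairwise_cons hpairrest this
              omega
            obtain ⟨T', pos, hins, htwin, hpres, hne'⟩ := col_main L0 (L0 - (i+1)) T (i+1) (x+2)
              (by omega) hTne hT0
              (fun y hy => by have := hrow0 y hy; omega)
              hlen hlen1 hsfxc hcolsc
              (key_prop hlen hT0 hiL0 le_rfl
                (by rw [hentii]; exact Option.some_ne_none _) hgt₀)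
            refine ⟨T', pos, true,
              InsRow.parity T i x b rest T' pos true htw hdw hxb hpar hins, ?_, hpres, hne'⟩
            intro γ
            apply InsRow.parity (extT T γ) i x b rest (extT T' γ) pos true
            · rw [getD_extT hTne γ hi]; exact htw
            · rw [getD_extT hTne γ hi]; exact hdw
            · exact hxb
            · exact hpar
            · exact htwin γ
        · -- bumpRow case
          set pre : List ℕ := r.takeWhile p with hpre
          have hprene : pre ≠ [] := by
            intro he
            rw [hpre] at he
            rw [← List.length_eq_zero_iff, ← hk] at he
            omega
          have hpre_lt : ∀ u ∈ pre, u < x := by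
            intro u hu
            rw [hpre] at hu
            have := List.mem_takeWhile_imp hu
            simpa [hp] using this
          have hklen : pre.length = k := by rw [hpre, hk]
          set T₁ : Tab := T.set i (pre ++ x :: rest) with hT₁
          have hrowi₁ : T₁.getD i [] = pre ++ x :: rest := getD_set_self _ hiT
          have hgetD₁ : ∀ j, j ≠ i → T₁.getD j [] = T.getD j [] :=
            fun j hj => getD_set_ne _ _ _ _ (fun he => hj he.symm)
          have hT₁ne : T₁ ≠ [] := set_ne_nil hTne _ _
          have hT0₁ : (T₁.getD 0 []).length = L0 + 1 := by
            rw [hgetD₁ 0 (by omega)]; exact hT0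
          have hT₁len : T₁.length = T.length := by rw [hT₁, List.length_set]
          have hlenr : (pre ++ x :: rest).length = (T.getD i []).length := by
            rw [← hr, ← hsplit]
            simp
          have hlen₁ : List.Chain' (fun r s : List ℕ => s.length < r.length) T₁ :=
            lenchain_set hlenr hlen
          have hlen1₁ : ∀ j, 1 ≤ j → j < T₁.length → (T₁.getD j []).length + j ≤ L0 := by
            intro j hj hjT
            rw [hT₁len] at hjT
            by_cases hji : j = i
            · rw [hji, hrowi₁, hlenr]
              exact hlen1 i hi hiT
            · rw [hgetD₁ j hji]
              exact hlen1 j hj hjT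
          have hpair_old : List.Pairwise (· < ·) (pre ++ b :: rest) := by
            rw [hpre, hsplit]
            exact hri
          have hrows₁ : ∀ j, 1 ≤ j → List.Pairwise (· < ·) (T₁.getD j []) := by
            intro j hj
            by_cases hji : j = i
            · rw [hji, hrowi₁]
              exact pairwise_bump hpre_lt hxb hpair_old
            · rw [hgetD₁ j hji]
              exact hrows j hj
          have hgetb : (T.getD i [])[pre.length]? = some b := by
            rw [← hr, ← hsplit]
            exact get?_append_len
          have hcols₁ : ∀ i' k' u v, i+1 ≤ i' + 1 + k' →
              (T₁.getD (i'+1) [])[k']? = some u →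
              (T₁.getD i' [])[k'+1]? = some v → v < u := by
            intro i' k' u v hg h1 h2
            by_cases hi1 : i' + 1 = i
            · have hv' : (T.getD i' [])[k'+1]? = some v := by
                rwa [hgetD₁ i' (by omega)] at h2
              rw [hi1, hrowi₁] at h1
              by_cases hkk : k' = pre.length
              · have hux : x = u := by
                  rw [hkk, get?_append_len] at h1
                  injection h1
                have harg : (T.getD (i-1) [])[k + 1]? = some v := by
                  rw [show i - 1 = i' by omega, ← hklen, ← hkk]
                  exact hv'
                have hvx := hup v hprene harg
                omega
              · have h1' : (T.getD i [])[k']? = some u := by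
                  rw [← hr, ← hsplit, ← get?_append_mid hkk]
                  exact h1
                exact hcols i' k' u v (by omega) (by rw [hi1]; exact h1') hv'
            · by_cases hi2 : i' = i
              · have hu' : (T.getD (i'+1) [])[k']? = some u := by
                  rwa [hgetD₁ (i'+1) (by omega)] at h1
                rw [hi2, hrowi₁] at h2
                by_cases hkk : k' + 1 = pre.length
                · have hvx : x = v := by
                    rw [hkk, get?_append_len] at h2
                    exact Option.some.inj h2
                  have hb : b < u := by
                    apply hcols i' k' u b (by omega) hu'
                    rw [hi2, hkk]
                    exact hgetb
                  omega
                · have h2' : (T.getD i [])[k'+1]? = some v := by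
                    rw [← hr, ← hsplit, ← get?_append_mid hkk]
                    exact h2
                  apply hcols i' k' u v (by omega) hu'
                  rw [hi2]
                  exact h2'
              · exact hcols i' k' u v (by omega)
                  (by rwa [hgetD₁ (i'+1) hi1] at h1)
                  (by rwa [hgetD₁ i' hi2] at h2)
          have hup₁ : ∀ z, (T₁.getD (i+1) []).takeWhile (fun y => decide (y < b)) ≠ [] →
              (T₁.getD (i+1-1) [])[((T₁.getD (i+1) []).takeWhile (fun y => decide (y < b))).length + 1]?
                = some z → z < b := by
            intro z htw' hz
            rw [hgetD₁ (i+1) (by omega)] at htw' hz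
            rw [show i + 1 - 1 = i by omega, hrowi₁] at hz
            set k' : ℕ := ((T.getD (i+1) []).takeWhile (fun y => decide (y < b))).length
              with hk'
            have hk'1 : 1 ≤ k' := by
              rcases Nat.eq_zero_or_pos k' with h0 | h0
              · rw [hk', List.length_eq_zero_iff] at h0
                exact absurd h0 htw'
              · exact h0
            have hk'k : k' < pre.length := by
              by_contra hge
              obtain ⟨u', hu', hpu'⟩ := takeWhile_get? (p := fun y => decide (y < b))
                (l := T.getD (i+1) []) (j := pre.length - 1) (by omega)
              have hub : u' < b := by simpa using hpu'
              have : b < u' := by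
                apply hcols i (pre.length - 1) u' b (by omega) hu'
                rw [show pre.length - 1 + 1 = pre.length by omega]
                exact hgetb
              omega
            rcases Nat.lt_or_ge (k' + 1) pre.length with hlt | hge
            · have hzpre : pre[k'+1]? = some z := by
                rw [List.getElem?_append_left hlt] at hz
                exact hz
              have : z ∈ pre := List.mem_of_getElem? hzpre
              have := hpre_lt z this
              omega
            · have hzk : k' + 1 = pre.length := by omega
              rw [hzk, get?_append_len] at hz
              have : x = z := Option.some.inj hz
              omega
          obtain ⟨T', pos, pr, hins, htwin, hpres, hne'⟩ := ih T₁ (i+1) b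
            (by omega) (by omega) hT₁ne hT0₁
            (by
              rw [hgetD₁ 0 (by omega)]
              intro y hy
              have := hrow0 y hy
              omega)
            hlen₁ hlen1₁ hrows₁ hcols₁ hup₁
          rw [hT₁] at hins
          refine ⟨T', pos, pr,
            InsRow.bumpRow T i x b pre rest T' pos pr (by rw [hpre, hr, hp]) hdw hxb
              hprene hins, ?_, ?_, hne'⟩
          · intro γ
            apply InsRow.bumpRow (extT T γ) i x b pre rest (extT T' γ) pos pr
            · rw [getD_extT hTne γ hi, hpre, hr, hp]
            · rw [getD_extT hTne γ hi]; exact hdw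
            · exact hxb
            · exact hprene
            · rw [set_extT hTne hi, ← hT₁]
              exact htwin γ
          · rw [hpres, hgetD₁ 0 (by omega)]

end RowMain

section Assemble

open List

lemma updRow_zero_cons (r s : List ℕ) (ts : Tab) : updRow (r :: ts) 0 s = s :: ts := by
  unfold updRow
  rw [if_pos (by simp)]
  rfl

lemma updRow_zero_ext {T : Tab} (h : T ≠ []) {R : List ℕ} (hR : T.getD 0 [] = R) (γ : ℕ) :
    updRow T 0 (R ++ [γ]) = extT T γ := by
  obtain ⟨t0, ts, rfl⟩ := List.exists_cons_of_ne_nil h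
  have ht0 : t0 = R := by simpa using hR
  subst ht0
  rw [updRow_zero_cons]
  rfl

lemma all_lt_dropWhile {l : List ℕ} {x : ℕ} (h : ∀ y ∈ l, y < x) :
    l.dropWhile (fun y => decide (y < x)) = [] :=
  (tw_all (fun y hy => by simpa using h y hy)).2

end Assemble

/-- If every entry of the first row of the increasing shifted tableau `T` is smaller
than `a`, and `a < b < c` with `row(T)·bac` an FPF-involution word, then `T ← bac` and
`T ← bca` agree; both append `a` and `c` to the end of the first row (the letter `b`
being inserted into the second row). -/
theorem first_row_small_bac_eq_bca (T : Tab) (a b c : ℕ)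
    (hne : T ≠ []) (hT : IsIncreasingTab T)
    (hsmall : ∀ y ∈ T.getD 0 [], y < a) (hab : a < b) (hbc : b < c)
    (h : IsFPFWord (rowWord T ++ [b, a, c])) :
    ∃ U : Tab, InsWord T [b, a, c] U ∧ InsWord T [b, c, a] U ∧
      U.getD 0 [] = T.getD 0 [] ++ [a, c] := by
  obtain ⟨R0, Ts, rfl⟩ := List.exists_cons_of_ne_nil hne
  obtain ⟨hTrne, hTlen, hTrows, hTpos, hTcols⟩ := hT
  have hR0 : (R0 :: Ts : Tab).getD 0 [] = R0 := rfl
  have hR0ne : R0 ≠ [] := hTrne R0 (by simp)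
  have hsmall' : ∀ y ∈ R0, y < a := by
    intro y hy
    exact hsmall y (by rw [hR0]; exact hy)
  set L0 := R0.length with hL0
  have hL01 : 1 ≤ L0 := by
    rw [hL0]
    cases hR : R0 with
    | nil => exact absurd hR hR0ne
    | cons _ _ => simp
  -- Step 1 : insert b, appended at the end of the first row
  have hdwb : R0.dropWhile (fun y => decide (y < b)) = [] :=
    all_lt_dropWhile (fun y hy => lt_trans (hsmall' y hy) hab)
  have s1 : InsRow (R0 :: Ts) 0 b ((R0 ++ [b]) :: Ts) (0, 0 + R0.length) false := by
    have := InsRow.append (R0 :: Ts) 0 b R0 rfl hdwb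
    rwa [updRow_zero_cons] at this
  -- The middle tableau T'' = (R0 ++ [a]) :: Ts and the main insertion of b into row 1
  set T'' : Tab := (R0 ++ [a]) :: Ts with hT''
  have hT''0 : (T''.getD 0 []).length = L0 + 1 := by simp [hT'', hL0]
  have hT''ne : T'' ≠ [] := by simp [hT'']
  have hgetT'' : ∀ j, 1 ≤ j → T''.getD j [] = (R0 :: Ts : Tab).getD j [] := by
    intro j hj
    obtain ⟨j', rfl⟩ := Nat.exists_eq_add_of_le hj
    rw [show 1 + j' = j' + 1 by omega]
    simp [hT'', List.getD_cons_succ]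
  have hlenb := len_bound hTlen
  have hlen'' : List.Chain' (fun r s : List ℕ => s.length < r.length) T'' := by
    rw [hT'']
    rcases Ts with _ | ⟨t1, ts⟩
    · exact List.isChain_singleton _
    · simp only [List.Chain', List.isChain_cons_cons] at hTlen ⊢
      refine ⟨by have := hTlen.1; simp; omega, hTlen.2⟩
  have hlen1'' : ∀ j, 1 ≤ j → j < T''.length → (T''.getD j []).length + j ≤ L0 := by
    intro j hj hjT
    rw [hgetT'' j hj]
    have := hlenb j (by simpa [hT''] using hjT)
    simpa using this
  have hrows'' : ∀ j, 1 ≤ j → List.Pairwise (· < ·) (T''.getD j []) := by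
    intro j hj
    rw [hgetT'' j hj]
    rcases Nat.lt_or_ge j (R0 :: Ts : Tab).length with hlt | hge
    · have hmem : (R0 :: Ts : Tab).getD j [] ∈ (R0 :: Ts : Tab) :=
        List.mem_of_getElem? (get?_eq_some_getD hlt)
      exact List.isChain_iff_pairwise.1 (hTrows _ hmem)
    · rw [getD_of_len_le hge]
      simp
  have hcols'' : ∀ i' k u v, 1 ≤ i' + 1 + k → (T''.getD (i'+1) [])[k]? = some u →
      (T''.getD i' [])[k+1]? = some v → v < u := by
    intro i' k u v _ h1 h2
    rw [hgetT'' (i'+1) (by omega)] at h1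
    cases i' with
    | zero =>
      have h2' : (R0 ++ [a])[k+1]? = some v := h2
      rcases lt_trichotomy (k+1) R0.length with hlt | heq | hgt
      · rw [List.getElem?_append_left hlt] at h2'
        exact hTcols 0 k u v h1 h2'
      · exfalso
        have hTs : Ts ≠ [] := by
          intro he
          rw [he] at h1
          simp [List.getD_cons_succ] at h1
        have h1len : k < ((R0 :: Ts : Tab).getD 1 []).length :=
          (List.getElem?_eq_some_iff.1 h1).1
        have hlb := hlenb 1 (by
          rcases Ts with _ | _
          · exact absurd rfl hTs
          · simp)
        simp only [List.getD_cons_zero, List.getD_cons_succ] at hlb h1len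
        omega
      · rw [List.getElem?_eq_none_iff.2 (by simp; omega)] at h2'
        exact absurd h2' (by simp)
    | succ j =>
      rw [hgetT'' (j+1) (by omega)] at h2
      exact hTcols (j+1) k u v h1 h2
  have hup'' : ∀ z, (T''.getD 1 []).takeWhile (fun y => decide (y < b)) ≠ [] →
      (T''.getD (1-1) [])[((T''.getD 1 []).takeWhile (fun y => decide (y < b))).length + 1]? = some z →
      z < b := by
    intro z _ hz
    have hzmem : z ∈ R0 ++ [a] := List.mem_of_getElem? hz
    rcases List.mem_append.1 hzmem with h | h
    · exact lt_trans (hsmall' z h) hab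
    · simp at h
      omega
  obtain ⟨T₂, pos, pr, hins2, htwin2, hpres2, hne2⟩ := row_main L0 Ts.length T'' 1 b
    (by simp only [hT'', List.length_cons]; omega) le_rfl hT''ne hT''0
    (by
      intro y hy
      simp [hT''] at hy
      rcases hy with h | h
      · exact lt_trans (hsmall' y h) hab
      · omega)
    hlen'' hlen1'' hrows'' hcols'' hup''
  have hpres2' : T₂.getD 0 [] = R0 ++ [a] := hpres2
  -- Step 2 (bac) : insert a, bumping b into row 1
  have htsplit := tw_split (p := fun y => decide (y < a)) (z := b)
    (by simp; omega) (l := R0) []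
    (fun y hy => by simpa using hsmall' y hy)
  have s2 : InsRow ((R0 ++ [b]) :: Ts) 0 a T₂ pos pr := by
    apply InsRow.bumpRow ((R0 ++ [b]) :: Ts) 0 a b R0 [] T₂ pos pr
    · rw [show ((R0 ++ [b]) :: Ts : Tab).getD 0 [] = R0 ++ b :: [] from rfl]
      exact htsplit.1.symm
    · rw [show ((R0 ++ [b]) :: Ts : Tab).getD 0 [] = R0 ++ b :: [] from rfl]
      exact htsplit.2
    · exact hab
    · exact hR0ne
    · rw [show (((R0 ++ [b]) :: Ts : Tab).set 0 (R0 ++ a :: [])) = T'' by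
        rw [hT'']; rfl]
      exact hins2
  -- Step 3 (bac) : insert c, appended at the end of the first row
  have hdwc : (R0 ++ [a]).dropWhile (fun y => decide (y < c)) = [] := by
    apply all_lt_dropWhile
    intro y hy
    rcases List.mem_append.1 hy with h | h
    · have := hsmall' y h
      omega
    · simp at h
      omega
  have s3 : InsRow T₂ 0 c (extT T₂ c) (0, 0 + (R0 ++ [a]).length) false := by
    have := InsRow.append T₂ 0 c (R0 ++ [a]) hpres2'.symm hdwc
    rwa [updRow_zero_ext hne2 hpres2' c] at this
  -- Step 2' (bca) : insert c, appended after b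
  have hdwbc : (R0 ++ [b]).dropWhile (fun y => decide (y < c)) = [] := by
    apply all_lt_dropWhile
    intro y hy
    rcases List.mem_append.1 hy with h | h
    · have := hsmall' y h
      omega
    · simp at h
      omega
  have s2' : InsRow ((R0 ++ [b]) :: Ts) 0 c (((R0 ++ [b]) ++ [c]) :: Ts)
      (0, 0 + (R0 ++ [b]).length) false := by
    have := InsRow.append ((R0 ++ [b]) :: Ts) 0 c (R0 ++ [b]) rfl hdwbc
    rwa [updRow_zero_cons] at this
  -- Step 3' (bca) : insert a, bumping b into row 1 of the extended tableau
  have htsplit' := tw_split (p := fun y => decide (y < a)) (z := b)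
    (by simp; omega) (l := R0) [c]
    (fun y hy => by simpa using hsmall' y hy)
  have hrow1' : (((R0 ++ [b]) ++ [c]) :: Ts : Tab).getD 0 [] = R0 ++ b :: [c] := by
    simp
  have s3' : InsRow (((R0 ++ [b]) ++ [c]) :: Ts) 0 a (extT T₂ c) pos pr := by
    apply InsRow.bumpRow (((R0 ++ [b]) ++ [c]) :: Ts) 0 a b R0 [c] (extT T₂ c) pos pr
    · rw [hrow1']
      exact htsplit'.1.symm
    · rw [hrow1']
      exact htsplit'.2
    · exact hab
    · exact hR0ne
    · rw [show ((((R0 ++ [b]) ++ [c]) :: Ts : Tab).set 0 (R0 ++ a :: [c])) = extT T'' c by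
        rw [show extT T'' c = ((R0 ++ [a]) ++ [c]) :: Ts from rfl]
        simp]
      exact htwin2 c
  refine ⟨extT T₂ c, ?_, ?_, ?_⟩
  · exact InsWord.cons _ _ _ b [a, c] _ _ s1
      (InsWord.cons _ _ _ a [c] _ _ s2
        (InsWord.cons _ _ _ c [] _ _ s3 (InsWord.nil _)))
  · exact InsWord.cons _ _ _ b [c, a] _ _ s1
      (InsWord.cons _ _ _ c [a] _ _ s2'
        (InsWord.cons _ _ _ a [] _ _ s3' (InsWord.nil _)))
  · rw [show (extT T₂ c).getD 0 [] = T₂.getD 0 [] ++ [c] from rfl, hpres2']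
    simp
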